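/- Let X be a finite-dimensional real normed vector space ordered by a closed cone X₊ with non-empty topological interior, and let L(X)₊ := {T ∈ L(X) : T X₊ ⊆ X₊}. For every x in the interior of X₊ and every x' in the interior of the dual cone X₊', the rank-one operator x ⊗ x' (defined by (x ⊗ x')y := ⟨x', y⟩ x) lies in the topological interior of L(X)₊ in L(X); in particular, the interior of L(X)₊ is non-empty and the cone L(X)₊ is generating in L(X), i.e. L(X)₊ − L(X)₊ = L(X). -/

import Mathlib

set_option synthInstance.maxHeartbeats 1000000
set_option maxHeartbeats 1000000

open Metric Set

/-- If `x` is interior to the cone `C` and `x'` is a functional bounded below by `c‖·‖`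
on `C` for some `c > 0`, then the rank-one operator `smulRight x' x` lies in the interior
of the cone of `C`-positive operators. -/
theorem aux_rankOne_interior (X : Type*) [NormedAddCommGroup X] [NormedSpace ℝ X]
    (C : Set X) (hC_smul : ∀ (l : ℝ), 0 ≤ l → ∀ x ∈ C, l • x ∈ C)
    (h0C : (0:X) ∈ C)
    (x : X) (hx : x ∈ interior C) (x' : X →L[ℝ] ℝ) (c : ℝ) (hc : 0 < c)
    (hx' : ∀ y ∈ C, c * ‖y‖ ≤ x' y) :
    ContinuousLinearMap.smulRight x' x ∈ interior {S : X →L[ℝ] X | ∀ y ∈ C, S y ∈ C} := by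
  obtain ⟨δ, hδ, hball⟩ := Metric.isOpen_iff.1 isOpen_interior x hx
  set T := ContinuousLinearMap.smulRight x' x with hTdef
  rw [mem_interior]
  refine ⟨Metric.ball T (c * δ), ?_, Metric.isOpen_ball,
    Metric.mem_ball_self (by positivity)⟩
  intro S hS
  intro y hy
  rcases eq_or_ne y 0 with rfl | hy0
  · simpa using h0C
  · have hny : 0 < ‖y‖ := norm_pos_iff.2 hy0
    have ha : 0 < x' y := lt_of_lt_of_le (by positivity) (hx' y hy)
    have hST : ‖S - T‖ < c * δ := by rwa [Metric.mem_ball, dist_eq_norm] at hS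
    have hv : x + (x' y)⁻¹ • ((S - T) y) ∈ C := by
      apply interior_subset
      apply hball
      rw [Metric.mem_ball, dist_eq_norm]
      have h1 : ‖x + (x' y)⁻¹ • ((S - T) y) - x‖ = (x' y)⁻¹ * ‖(S - T) y‖ := by
        rw [add_sub_cancel_left, norm_smul, Real.norm_eq_abs, abs_of_pos (inv_pos.2 ha)]
      rw [h1]
      have h2 : ‖(S - T) y‖ ≤ ‖S - T‖ * ‖y‖ := (S - T).le_opNorm y
      calc (x' y)⁻¹ * ‖(S - T) y‖
          ≤ (x' y)⁻¹ * (‖S - T‖ * ‖y‖) :=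
            mul_le_mul_of_nonneg_left h2 (inv_pos.2 ha).le
        _ < (x' y)⁻¹ * (c * δ * ‖y‖) := by
            apply mul_lt_mul_of_pos_left _ (inv_pos.2 ha)
            exact mul_lt_mul_of_pos_right hST hny
        _ ≤ δ := by
            rw [inv_mul_le_iff₀ ha]
            have := hx' y hy
            nlinarith
    have hSy : S y = x' y • (x + (x' y)⁻¹ • ((S - T) y)) := by
      rw [smul_add, smul_smul, mul_inv_cancel₀ ha.ne', one_smul,
        ContinuousLinearMap.sub_apply]
      have hT : T y = x' y • x := rfl
      rw [hT]; abel
    rw [hSy]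
    exact hC_smul (x' y) ha.le _ hv

/-- Any functional in the interior of the dual cone is bounded below by `c‖·‖` on `C`. -/
theorem aux_dual_interior_bound (X : Type*) [NormedAddCommGroup X] [NormedSpace ℝ X]
    (C : Set X) (x' : X →L[ℝ] ℝ)
    (hx' : x' ∈ interior {f : X →L[ℝ] ℝ | ∀ y ∈ C, 0 ≤ f y}) :
    ∃ c : ℝ, 0 < c ∧ ∀ y ∈ C, c * ‖y‖ ≤ x' y := by
  obtain ⟨r, hr, hball⟩ := Metric.isOpen_iff.1 isOpen_interior x' hx'
  refine ⟨r / 2, by positivity, ?_⟩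
  intro y hy
  rcases eq_or_ne y 0 with rfl | hy0
  · simp
  · obtain ⟨g, hg1, hgy⟩ := exists_dual_vector ℝ y (norm_ne_zero_iff.2 hy0)
    have hmem : x' - (r / 2) • g ∈ interior {f : X →L[ℝ] ℝ | ∀ y ∈ C, 0 ≤ f y} := by
      apply hball
      rw [Metric.mem_ball, dist_eq_norm]
      have : x' - (r / 2) • g - x' = -((r / 2) • g) := by abel
      rw [this, norm_neg]
      have hns : ‖(r / 2) • g‖ ≤ ‖(r/2 : ℝ)‖ * ‖g‖ := ContinuousLinearMap.opNorm_smul_le _ _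
      rw [Real.norm_eq_abs, abs_of_pos (by positivity), hg1] at hns
      linarith
    have h2 := (interior_subset hmem) y hy
    simp only [ContinuousLinearMap.sub_apply, ContinuousLinearMap.smul_apply,
      smul_eq_mul] at h2
    have hgy' : g y = ‖y‖ := by exact_mod_cast hgy
    rw [hgy'] at h2
    linarith

/-- Existence of a uniformly strictly positive functional for a closed pointed cone. -/
theorem aux_strict_functional (X : Type*) [NormedAddCommGroup X] [NormedSpace ℝ X]
    [FiniteDimensional ℝ X]
    (C : Set X) (hC_closed : IsClosed C)
    (hC_add : ∀ x ∈ C, ∀ y ∈ C, x + y ∈ C)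
    (hC_smul : ∀ (l : ℝ), 0 ≤ l → ∀ x ∈ C, l • x ∈ C)
    (hC_pointed : C ∩ (-C) = {0})
    (h0C : (0:X) ∈ C) :
    ∃ (f : X →L[ℝ] ℝ) (c : ℝ), 0 < c ∧ ∀ y ∈ C, c * ‖y‖ ≤ f y := by
  have hconv : Convex ℝ C := by
    intro a ha b hb s t hs ht hst
    exact hC_add _ (hC_smul s hs a ha) _ (hC_smul t ht b hb)
  by_cases hK : (C ∩ Metric.sphere 0 1).Nonempty
  · set K := C ∩ Metric.sphere 0 1 with hKdef
    have hKcomp : IsCompact K := (isCompact_sphere 0 1).inter_left hC_closed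
    have hsep : ∀ y : K, ∃ (f : X →L[ℝ] ℝ) (u : ℝ), 0 < u ∧ u < f y ∧ ∀ z ∈ C, 0 ≤ f z := by
      rintro ⟨y, hyC, hys⟩
      have hy0 : y ≠ 0 := by
        intro h
        rw [h] at hys
        simp at hys
      have hynC : y ∉ -C := by
        intro h
        have hmem : y ∈ C ∩ (-C) := ⟨hyC, h⟩
        rw [hC_pointed] at hmem
        exact hy0 hmem
      obtain ⟨f, u, hfu, huy⟩ :=
        geometric_hahn_banach_closed_point hconv.neg hC_closed.neg hynC
      have hu0 : 0 < u := by
        have := hfu 0 (by simpa using h0C)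
        simpa using this
      refine ⟨f, u, hu0, huy, ?_⟩
      intro z hz
      by_contra hneg
      push_neg at hneg
      set s := (u + 1) / (-(f z)) with hsdef
      have hfz : 0 < -(f z) := by linarith
      have hs0 : 0 ≤ s := by positivity
      have h1 : -(s • z) ∈ -C := by
        rw [Set.mem_neg, neg_neg]
        exact hC_smul s hs0 z hz
      have h2 := hfu _ h1
      rw [map_neg, map_smul, smul_eq_mul] at h2
      have h3 : -(s * f z) = u + 1 := by
        rw [hsdef]
        field_simp
        rw [div_self (show f z ≠ 0 by linarith)]
      linarith
    choose F U hU0 hUy hFpos using hsep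
    obtain ⟨t, ht⟩ := hKcomp.elim_finite_subcover (fun y : K => {z | U y < F y z})
      (fun y => isOpen_lt continuous_const (F y).continuous)
      (by
        intro z hz
        exact Set.mem_iUnion.2 ⟨⟨z, hz⟩, hUy ⟨z, hz⟩⟩)
    have htne : t.Nonempty := by
      obtain ⟨k, hk⟩ := hK
      have := ht hk
      simp only [Set.mem_iUnion] at this
      obtain ⟨i, hi, _⟩ := this
      exact ⟨i, hi⟩
    refine ⟨∑ i ∈ t, F i, t.inf' htne U, ?_, ?_⟩
    · rw [Finset.lt_inf'_iff]
      exact fun i _ => hU0 i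
    · intro y hy
      rcases eq_or_ne y 0 with rfl | hy0
      · simp
      · have hny : 0 < ‖y‖ := norm_pos_iff.2 hy0
        set z := ‖y‖⁻¹ • y with hzdef
        have hzC : z ∈ C := hC_smul _ (by positivity) y hy
        have hzK : z ∈ K := by
          refine ⟨hzC, ?_⟩
          simp only [mem_sphere_iff_norm, sub_zero, hzdef, norm_smul,
            Real.norm_eq_abs, abs_of_pos (inv_pos.2 hny)]
          field_simp
        have hz : t.inf' htne U ≤ (∑ i ∈ t, F i) z := by
          have hcov := ht hzK
          simp only [Set.mem_iUnion] at hcov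
          obtain ⟨i, hit, hi⟩ := hcov
          have hsum : (∑ j ∈ t, F j) z = ∑ j ∈ t, F j z := by
            simp [ContinuousLinearMap.sum_apply]
          calc t.inf' htne U ≤ U i := Finset.inf'_le _ hit
            _ ≤ F i z := le_of_lt hi
            _ ≤ (∑ j ∈ t, F j) z := by
                rw [hsum]
                exact Finset.single_le_sum (fun j _ => hFpos j z hzC) hit
        have hyz : (∑ i ∈ t, F i) y = ‖y‖ * (∑ i ∈ t, F i) z := by
          rw [hzdef, map_smul, smul_eq_mul]
          field_simp
        rw [hyz]
        calc t.inf' htne U * ‖y‖ ≤ (∑ i ∈ t, F i) z * ‖y‖ :=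
              mul_le_mul_of_nonneg_right hz hny.le
          _ = ‖y‖ * (∑ i ∈ t, F i) z := mul_comm _ _
  · refine ⟨0, 1, one_pos, ?_⟩
    intro y hy
    rcases eq_or_ne y 0 with rfl | hy0
    · simp
    · exfalso
      have hny : 0 < ‖y‖ := norm_pos_iff.2 hy0
      refine hK ⟨‖y‖⁻¹ • y, hC_smul _ (by positivity) y hy, ?_⟩
      simp only [mem_sphere_iff_norm, sub_zero, norm_smul, Real.norm_eq_abs,
        abs_of_pos (inv_pos.2 hny)]
      field_simp

/-- For a finite-dimensional real normed space `X` ordered by a closed cone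
`C` with non-empty interior: for every `x` in the interior of `C` and every `x'` in the
interior of the dual cone, the rank-one operator `x ⊗ x' : y ↦ ⟨x', y⟩ x` lies in the
interior of the cone `L(X)₊` of nonnegative operators; in particular this interior is
non-empty and `L(X)₊` is generating. -/
theorem rankOne_mem_interior_operatorCone
    (X : Type*) [NormedAddCommGroup X] [NormedSpace ℝ X] [FiniteDimensional ℝ X]
    (C : Set X) (hC_closed : IsClosed C)
    (hC_add : ∀ x ∈ C, ∀ y ∈ C, x + y ∈ C)
    (hC_smul : ∀ (l : ℝ), 0 ≤ l → ∀ x ∈ C, l • x ∈ C)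
    (hC_pointed : C ∩ (-C) = {0})
    (hC_int : (interior C).Nonempty) :
    (∀ x ∈ interior C, ∀ x' ∈ interior {f : X →L[ℝ] ℝ | ∀ y ∈ C, 0 ≤ f y},
        ContinuousLinearMap.smulRight x' x ∈ interior {S : X →L[ℝ] X | ∀ y ∈ C, S y ∈ C}) ∧
      (interior {S : X →L[ℝ] X | ∀ y ∈ C, S y ∈ C}).Nonempty ∧
      (∀ T : X →L[ℝ] X, ∃ T₁ ∈ {S : X →L[ℝ] X | ∀ y ∈ C, S y ∈ C},
        ∃ T₂ ∈ {S : X →L[ℝ] X | ∀ y ∈ C, S y ∈ C}, T = T₁ - T₂) := by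
  obtain ⟨x₀, hx₀⟩ := hC_int
  have h0C : (0:X) ∈ C := by
    have := hC_smul 0 le_rfl x₀ (interior_subset hx₀)
    simpa using this
  have part1 : ∀ x ∈ interior C, ∀ x' ∈ interior {f : X →L[ℝ] ℝ | ∀ y ∈ C, 0 ≤ f y},
      ContinuousLinearMap.smulRight x' x ∈ interior {S : X →L[ℝ] X | ∀ y ∈ C, S y ∈ C} := by
    intro x hx x' hx'
    obtain ⟨c, hc, hbound⟩ := aux_dual_interior_bound X C x' hx'
    exact aux_rankOne_interior X C hC_smul h0C x hx x' c hc hbound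
  obtain ⟨f, c, hc, hf⟩ :=
    aux_strict_functional X C hC_closed hC_add hC_smul hC_pointed h0C
  have hT₀ : ContinuousLinearMap.smulRight f x₀ ∈
      interior {S : X →L[ℝ] X | ∀ y ∈ C, S y ∈ C} :=
    aux_rankOne_interior X C hC_smul h0C x₀ hx₀ f c hc hf
  refine ⟨part1, ⟨_, hT₀⟩, ?_⟩
  intro T
  set T₀ := ContinuousLinearMap.smulRight f x₀ with hT₀def
  obtain ⟨ε, hε, hball⟩ := Metric.isOpen_iff.1 isOpen_interior T₀ hT₀
  set s := ‖T‖ / ε + 1 with hsdef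
  have hs : 0 < s := by positivity
  have hdist : T₀ + s⁻¹ • T ∈ interior {S : X →L[ℝ] X | ∀ y ∈ C, S y ∈ C} := by
    apply hball
    rw [Metric.mem_ball, dist_eq_norm]
    have h1 : T₀ + s⁻¹ • T - T₀ = s⁻¹ • T := by abel
    rw [h1]
    have hns : ‖s⁻¹ • T‖ ≤ ‖(s⁻¹ : ℝ)‖ * ‖T‖ := ContinuousLinearMap.opNorm_smul_le _ _
    rw [Real.norm_eq_abs, abs_of_pos (inv_pos.2 hs)] at hns
    have hlt : s⁻¹ * ‖T‖ < ε := by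
      rw [inv_mul_lt_iff₀ hs, hsdef, add_mul, one_mul, div_mul_cancel₀ _ hε.ne']
      linarith
    linarith
  have hsmul_mem : ∀ (l : ℝ), 0 ≤ l → ∀ S ∈ {S : X →L[ℝ] X | ∀ y ∈ C, S y ∈ C},
      l • S ∈ {S : X →L[ℝ] X | ∀ y ∈ C, S y ∈ C} := by
    intro l hl S hS y hy
    simp only [ContinuousLinearMap.smul_apply]
    exact hC_smul l hl _ (hS y hy)
  refine ⟨s • T₀ + T, ?_, s • T₀, hsmul_mem s hs.le T₀ (interior_subset hT₀), by abel⟩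
  have heq : s • T₀ + T = s • (T₀ + s⁻¹ • T) := by
    rw [smul_add, smul_smul, mul_inv_cancel₀ hs.ne', one_smul]
  rw [heq]
  exact hsmul_mem s hs.le _ (interior_subset hdist)
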